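/- Any distributive operation is strongly cumulative: if C is distributive and X_i ⊆ C(X_{i+1}) for i = 0,…,n−1 (indices mod n), then C(X_i) = C(X_j) for all i, j. -/

import Mathlib

section

open Fin.NatCast

variable {L : Type*} (Cn C : Set L → Set L)

private lemma recip_aux
    (hCut : ∀ X Y : Set L, Y ⊆ C X → C (X ∪ Y) ⊆ C X)
    (hCM : ∀ X Y : Set L, Y ⊆ C X → C X ⊆ C (X ∪ Y))
    {A B : Set L} (h1 : A ⊆ C B) (h2 : B ⊆ C A) : C A = C B := by
  have e1 : C A = C (A ∪ B) := Set.Subset.antisymm (hCM A B h2) (hCut A B h2)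
  have e2 : C B = C (B ∪ A) := Set.Subset.antisymm (hCM B A h1) (hCut B A h1)
  rw [e1, e2, Set.union_comm]

private lemma main_aux {n : ℕ} [NeZero n]
    (hInc : ∀ X : Set L, X ⊆ Cn X)
    (hMono : ∀ X Y : Set L, X ⊆ Y → Cn X ⊆ Cn Y)
    (hIdem : ∀ X : Set L, Cn (Cn X) = Cn X)
    (hCInc : ∀ X : Set L, X ⊆ C X)
    (hLAbs : ∀ X : Set L, Cn (C X) = C X)
    (hRAbs : ∀ X Y : Set L, Cn X = Cn Y → C X = C Y)
    (hCut : ∀ X Y : Set L, Y ⊆ C X → C (X ∪ Y) ⊆ C X)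
    (hCM : ∀ X Y : Set L, Y ⊆ C X → C X ⊆ C (X ∪ Y))
    (hDist : ∀ X Y Z : Set L, C (Z ∪ X) ∩ C (Z ∪ Y) ⊆ C (Z ∪ (Cn X ∩ Cn Y)))
    (X : Fin n → Set L) (hX : ∀ i : Fin n, X i ⊆ C (X (i + 1)))
    (i : Fin n) : C (X (i + 1)) = C (⋂ j, Cn (X j)) := by
  have hn : 1 ≤ n := Nat.one_le_iff_ne_zero.mpr (NeZero.ne n)
  set W : ℕ → Set L := fun k => ⋂ m ∈ Finset.Icc 1 k, Cn (X (i + (m : Fin n))) with hWdef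
  have hmemW : ∀ (k : ℕ) (a : L),
      a ∈ W k ↔ ∀ m : ℕ, 1 ≤ m → m ≤ k → a ∈ Cn (X (i + (m : Fin n))) := by
    intro k a
    simp [hWdef, Finset.mem_Icc]
  have hWsub : ∀ k m : ℕ, 1 ≤ m → m ≤ k → W k ⊆ Cn (X (i + (m : Fin n))) := by
    intro k m h1 h2 a ha
    exact (hmemW k a).1 ha m h1 h2
  have hWanti : ∀ k l : ℕ, k ≤ l → W l ⊆ W k := by
    intro k l hkl a ha
    rw [hmemW]
    intro m h1 h2
    exact (hmemW l a).1 ha m h1 (h2.trans hkl)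
  have hWclosed : ∀ k, Cn (W k) = W k := by
    intro k
    apply Set.Subset.antisymm _ (hInc _)
    intro a ha
    rw [hmemW]
    intro m h1 h2
    have h := hMono _ _ (hWsub k m h1 h2)
    rw [hIdem] at h
    exact h ha
  have hWsucc : ∀ k, W (k+1) = W k ∩ Cn (X (i + ((k+1 : ℕ) : Fin n))) := by
    intro k
    ext a
    rw [Set.mem_inter_iff, hmemW, hmemW]
    constructor
    · intro h
      exact ⟨fun m h1 h2 => h m h1 (h2.trans (Nat.le_succ k)), h (k+1) (by omega) le_rfl⟩
    · rintro ⟨h, hk⟩ m h1 h2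
      rcases Nat.lt_or_ge m (k+1) with hm | hm
      · exact h m h1 (by omega)
      · have hmk : m = k+1 := by omega
        subst hmk; exact hk
  have dist0 : ∀ A B : Set L, C A ∩ C B ⊆ C (Cn A ∩ Cn B) := by
    intro A B
    have h := hDist A B ∅
    simpa using h
  have castsucc : ∀ k : ℕ, (((k+1 : ℕ)) : Fin n) = (k : Fin n) + 1 := by
    intro k; push_cast; ring
  have hchain : ∀ k : ℕ, 1 ≤ k → W k ⊆ C (W (k+1)) := by
    intro k hk
    have h1 : W k ⊆ C (X (i + ((k+1:ℕ) : Fin n))) := by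
      have h2 : X (i + (k : Fin n)) ⊆ C (X (i + ((k+1:ℕ) : Fin n))) := by
        rw [castsucc, ← add_assoc]
        exact hX _
      have h3 : Cn (X (i + (k : Fin n))) ⊆ C (X (i + ((k+1:ℕ) : Fin n))) := by
        have h4 := hMono _ _ h2
        rwa [hLAbs] at h4
      exact (hWsub k k hk le_rfl).trans h3
    intro a ha
    have hmem : a ∈ C (Cn (W k) ∩ Cn (X (i + ((k+1:ℕ):Fin n)))) :=
      dist0 _ _ ⟨hCInc _ ha, h1 ha⟩
    rw [hWclosed, ← hWsucc] at hmem
    exact hmem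
  have hdown : ∀ m : ℕ, m ≤ n - 1 → C (W (n - m)) = C (W n) := by
    intro m
    induction m with
    | zero => intro _; rfl
    | succ m ih =>
      intro h
      have ihm := ih (by omega)
      have hk1 : n - (m+1) + 1 = n - m := by omega
      have hk : 1 ≤ n - (m+1) := by omega
      have hsub : W (n - (m+1)) ⊆ C (W n) := by
        have hc := hchain _ hk
        rwa [hk1, ihm] at hc
      have hsub2 : W n ⊆ C (W (n - (m+1))) :=
        fun a ha => hCInc _ (hWanti _ _ (by omega) ha)
      exact recip_aux C hCut hCM hsub hsub2
  have hW1 : C (W 1) = C (W n) := by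
    have h := hdown (n-1) le_rfl
    have e : n - (n-1) = 1 := by omega
    rwa [e] at h
  have hWnD : W n = ⋂ j, Cn (X j) := by
    apply Set.Subset.antisymm
    · intro a ha
      rw [Set.mem_iInter]
      intro j
      by_cases hji : j - i = 0
      · have h := (hmemW n a).1 ha n hn le_rfl
        have he : i + ((n:ℕ) : Fin n) = j := by
          have h0 : ((n:ℕ) : Fin n) = 0 := by simp
          rw [h0, add_zero]
          exact (sub_eq_zero.mp hji).symm
        rwa [he] at h
      · set m := (j - i : Fin n).val with hm
        have hm1 : 1 ≤ m := Nat.one_le_iff_ne_zero.mpr (fun h0 => hji (Fin.ext (by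
          rw [hm] at h0; simp [h0])))
        have hmn : m ≤ n := le_of_lt (j - i).isLt
        have h := (hmemW n a).1 ha m hm1 hmn
        have he : i + ((m:ℕ) : Fin n) = j := by
          rw [hm, Fin.cast_val_eq_self, add_comm, sub_add_cancel]
        rwa [he] at h
    · intro a ha
      rw [hmemW]
      intro m _ _
      exact Set.mem_iInter.1 ha _
  have hW1eq : W 1 = Cn (X (i+1)) := by
    ext a
    rw [hmemW]
    constructor
    · intro h
      have h1 := h 1 le_rfl le_rfl
      rwa [Nat.cast_one] at h1
    · intro h m h1 h2
      have hm1 : m = 1 := le_antisymm h2 h1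
      subst hm1
      rwa [Nat.cast_one]
  calc C (X (i+1)) = C (W 1) := by rw [hW1eq]; exact (hRAbs _ _ (hIdem _)).symm
    _ = C (W n) := hW1
    _ = C (⋂ j, Cn (X j)) := by rw [hWnD]

end

/-- any distributive operation is strongly cumulative. -/
theorem stmt_16 {L : Type*} (Cn C : Set L → Set L)
    (hInc : ∀ X : Set L, X ⊆ Cn X)
    (hMono : ∀ X Y : Set L, X ⊆ Y → Cn X ⊆ Cn Y)
    (hIdem : ∀ X : Set L, Cn (Cn X) = Cn X)
    (hCpt : ∀ (X : Set L) (a : L), a ∈ Cn X → ∃ A : Set L, A ⊆ X ∧ A.Finite ∧ a ∈ Cn A)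
    -- C is a cumulative inference operation
    (hCInc : ∀ X : Set L, X ⊆ C X)
    (hLAbs : ∀ X : Set L, Cn (C X) = C X)
    (hRAbs : ∀ X Y : Set L, Cn X = Cn Y → C X = C Y)
    (hCut : ∀ X Y : Set L, Y ⊆ C X → C (X ∪ Y) ⊆ C X)
    (hCM : ∀ X Y : Set L, Y ⊆ C X → C X ⊆ C (X ∪ Y))
    -- C is distributive
    (hDist : ∀ X Y Z : Set L, C (Z ∪ X) ∩ C (Z ∪ Y) ⊆ C (Z ∪ (Cn X ∩ Cn Y))) :
    ∀ (n : ℕ) [NeZero n] (X : Fin n → Set L),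
      (∀ i : Fin n, X i ⊆ C (X (i + 1))) →
      ∀ i j : Fin n, C (X i) = C (X j) := by
  intro n _ X hX i j
  have key : ∀ k : Fin n, C (X k) = C (⋂ j, Cn (X j)) := by
    intro k
    have h := main_aux Cn C hInc hMono hIdem hCInc hLAbs hRAbs hCut hCM hDist X hX (k - 1)
    rwa [sub_add_cancel] at h
  rw [key i, key j]
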